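/- Let D ≥ 2 and F ≥ 0. There is a constant C = C(D, F) such that for every v ∈ ℝ^{D−1} with |v| ≤ F and every δ ∈ (0,1], the function ψ defined on ℝ^D ∖ {0} by ψ(ξ_0, ξ) = δ|ξ|² / ((ξ_0 + v·ξ)² + δ|ξ|²), for (ξ_0, ξ) ∈ ℝ × ℝ^{D−1}, which is homogeneous of degree zero, satisfies |∇ψ(ξ_0, ξ)| ≤ C δ^{−1/2} for every unit vector (ξ_0, ξ) ∈ S^{D−1}, where ∇ψ is the gradient in ℝ^D and |·| the Euclidean norm. -/

import Mathlib

open MeasureTheory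

/-- The symbol `ψ(ξ_0, ξ) = δ|ξ|²/((ξ_0 + v·ξ)² + δ|ξ|²)`, written on
`ℝ^D = ℝ^{d+1}` with `ξ 0` the time frequency and `ξ k.succ` the spatial frequencies. -/
noncomputable def psiSym (d : ℕ) (v : EuclideanSpace ℝ (Fin d)) (δ : ℝ)
    (ξ : EuclideanSpace ℝ (Fin (d + 1))) : ℝ :=
  δ * (∑ k : Fin d, (ξ k.succ) ^ 2) /
    ((ξ 0 + ∑ k : Fin d, v k * ξ k.succ) ^ 2 + δ * ∑ k : Fin d, (ξ k.succ) ^ 2)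

lemma euclid_sum_sq {n : ℕ} (x : EuclideanSpace ℝ (Fin n)) : ∑ i, (x i)^2 = ‖x‖^2 := by
  have h := real_inner_self_eq_norm_sq x
  rw [PiLp.inner_apply] at h
  simpa [pow_two] using h

lemma euclid_coord_hasFDerivAt {n : ℕ} (ξ : EuclideanSpace ℝ (Fin n)) (i : Fin n) :
    HasFDerivAt (fun y : EuclideanSpace ℝ (Fin n) => y i)
      (EuclideanSpace.proj i : EuclideanSpace ℝ (Fin n) →L[ℝ] ℝ) ξ := by
  have h := (EuclideanSpace.proj i : EuclideanSpace ℝ (Fin n) →L[ℝ] ℝ).hasFDerivAt (x := ξ)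
  have he : ⇑(EuclideanSpace.proj i : EuclideanSpace ℝ (Fin n) →L[ℝ] ℝ)
      = fun y : EuclideanSpace ℝ (Fin n) => y i := by
    funext y; simp [PiLp.proj_apply]
  rwa [he] at h

set_option maxHeartbeats 1000000 in
/-- For `D = d + 1 ≥ 2` and `F ≥ 0` there is `C = C(D,F)` such that for
every `v` with `|v| ≤ F` and `δ ∈ (0,1]`, the symbol `ψ` is homogeneous of degree zero and
satisfies `|∇ψ(ξ)| ≤ C δ^{-1/2}` on the unit sphere. -/
theorem stmt7 (d : ℕ) (hd : 1 ≤ d) (F : ℝ) (hF : 0 ≤ F) :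
    ∃ C : ℝ, 0 < C ∧
      ∀ v : EuclideanSpace ℝ (Fin d), ‖v‖ ≤ F →
        ∀ δ : ℝ, 0 < δ → δ ≤ 1 →
          (∀ ξ : EuclideanSpace ℝ (Fin (d + 1)), ξ ≠ 0 → ∀ t : ℝ, 0 < t →
            psiSym d v δ (t • ξ) = psiSym d v δ ξ) ∧
          ∀ ξ : EuclideanSpace ℝ (Fin (d + 1)), ‖ξ‖ = 1 →
            ‖fderiv ℝ (psiSym d v δ) ξ‖ ≤ C * δ ^ (-(1 : ℝ) / 2) := by
  have hG2 : (Real.sqrt (3 + 2*F^2))^2 = 3 + 2*F^2 := Real.sq_sqrt (by positivity)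
  set G := Real.sqrt (3 + 2*F^2) with hGdef
  have hGpos : 0 < G := Real.sqrt_pos.mpr (by positivity)
  have hG1 : 1 ≤ G := by nlinarith
  refine ⟨2*G^2 + 2*(1+F)*G, by nlinarith, ?_⟩
  intro v hv δ hδ0 hδ1
  constructor
  · -- homogeneity
    intro ξ _ t ht
    have h1 : ∑ k : Fin d, ((t • ξ) k.succ)^2 = t^2 * ∑ k : Fin d, (ξ k.succ)^2 := by
      simp only [PiLp.smul_apply, smul_eq_mul, mul_pow, Finset.mul_sum]
    have h2 : ((t • ξ) 0 + ∑ k : Fin d, v k * (t • ξ) k.succ)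
        = t * (ξ 0 + ∑ k : Fin d, v k * ξ k.succ) := by
      simp only [PiLp.smul_apply, smul_eq_mul, mul_add, Finset.mul_sum]
      congr 1
      exact Finset.sum_congr rfl fun k _ => by ring
    have ht2 : (t:ℝ)^2 ≠ 0 := pow_ne_zero _ ht.ne'
    simp only [psiSym, h1, h2]
    rw [show (t * (ξ 0 + ∑ k : Fin d, v k * ξ k.succ))^2
          + δ * (t^2 * ∑ k : Fin d, (ξ k.succ)^2)
        = t^2 * ((ξ 0 + ∑ k : Fin d, v k * ξ k.succ)^2 + δ * ∑ k : Fin d, (ξ k.succ)^2)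
        from by ring,
      show δ * (t^2 * ∑ k : Fin d, (ξ k.succ)^2) = t^2 * (δ * ∑ k : Fin d, (ξ k.succ)^2)
        from by ring,
      mul_div_mul_left _ _ ht2]
  · -- gradient bound
    intro ξ hξ
    set S := ∑ k : Fin d, (ξ k.succ)^2 with hSdef
    set L := ξ 0 + ∑ k : Fin d, v k * ξ k.succ with hLdef
    set Q := L^2 + δ*S with hQdef
    have hS0 : 0 ≤ S := Finset.sum_nonneg fun k _ => sq_nonneg _
    have hsum1 : (ξ 0)^2 + S = 1 := by
      have h := euclid_sum_sq ξ
      rw [hξ, Fin.sum_univ_succ] at h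
      rw [hSdef]
      simpa using h
    have hS1 : S ≤ 1 := by nlinarith [sq_nonneg (ξ 0)]
    have hv2 : ∑ k : Fin d, (v k)^2 ≤ F^2 := by
      have h := euclid_sum_sq v
      nlinarith [norm_nonneg v]
    have hspat : ∀ h : EuclideanSpace ℝ (Fin (d+1)), ∑ k : Fin d, (h k.succ)^2 ≤ ‖h‖^2 := by
      intro h
      have h1 := euclid_sum_sq h
      rw [Fin.sum_univ_succ] at h1
      nlinarith [sq_nonneg (h 0)]
    have hCSv : ∀ h : EuclideanSpace ℝ (Fin (d+1)),
        (∑ k : Fin d, v k * h k.succ)^2 ≤ F^2 * ∑ k : Fin d, (h k.succ)^2 := by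
      intro h
      have h1 := Finset.sum_mul_sq_le_sq_mul_sq Finset.univ (fun k : Fin d => v k) (fun k => h k.succ)
      have h2 : (0:ℝ) ≤ ∑ k : Fin d, (h k.succ)^2 := Finset.sum_nonneg fun k _ => sq_nonneg _
      nlinarith [h1, h2, hv2]
    have hCSξ : ∀ h : EuclideanSpace ℝ (Fin (d+1)),
        (∑ k : Fin d, ξ k.succ * h k.succ)^2 ≤ S * ∑ k : Fin d, (h k.succ)^2 := by
      intro h
      have h1 := Finset.sum_mul_sq_le_sq_mul_sq Finset.univ (fun k : Fin d => ξ k.succ) (fun k => h k.succ)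
      rw [← hSdef] at h1
      exact h1
    have hQL : L^2 ≤ Q := by nlinarith
    have hQS : δ*S ≤ Q := by nlinarith [sq_nonneg L]
    have hQlow : δ ≤ (3+2*F^2) * Q := by
      have hx0 : (ξ 0)^2 ≤ 2*L^2 + 2*F^2*S := by
        have h1 := hCSv ξ
        rw [← hSdef] at h1
        have hξ0 : ξ 0 = L - ∑ k : Fin d, v k * ξ k.succ := by rw [hLdef]; ring
        rw [hξ0]
        nlinarith [h1, sq_nonneg (L + ∑ k : Fin d, v k * ξ k.succ)]
      have e1 : δ * (ξ 0)^2 ≤ δ * (2*L^2 + 2*F^2*S) :=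
        mul_le_mul_of_nonneg_left hx0 hδ0.le
      nlinarith [mul_nonneg hδ0.le hS0, sq_nonneg L,
        mul_nonneg (mul_nonneg hδ0.le hS0) (sq_nonneg F), mul_nonneg (sq_nonneg F) (sq_nonneg L)]
    have hQpos : 0 < Q := by nlinarith
    have hQne : Q ≠ 0 := hQpos.ne'
    -- continuous linear maps
    set dS : EuclideanSpace ℝ (Fin (d+1)) →L[ℝ] ℝ :=
      ∑ k : Fin d, (ξ k.succ • (EuclideanSpace.proj k.succ : EuclideanSpace ℝ (Fin (d+1)) →L[ℝ] ℝ)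
        + ξ k.succ • (EuclideanSpace.proj k.succ : EuclideanSpace ℝ (Fin (d+1)) →L[ℝ] ℝ)) with hdS
    set dL : EuclideanSpace ℝ (Fin (d+1)) →L[ℝ] ℝ :=
      (EuclideanSpace.proj 0 : EuclideanSpace ℝ (Fin (d+1)) →L[ℝ] ℝ)
        + ∑ k : Fin d, v k • (EuclideanSpace.proj k.succ : EuclideanSpace ℝ (Fin (d+1)) →L[ℝ] ℝ)
      with hdL
    have hdSapply : ∀ h : EuclideanSpace ℝ (Fin (d+1)),
        dS h = 2 * ∑ k : Fin d, ξ k.succ * h k.succ := by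
      intro h
      rw [hdS, ContinuousLinearMap.sum_apply, Finset.mul_sum]
      refine Finset.sum_congr rfl fun k _ => ?_
      simp [PiLp.proj_apply]
      ring
    have hdLapply : ∀ h : EuclideanSpace ℝ (Fin (d+1)),
        dL h = h 0 + ∑ k : Fin d, v k * h k.succ := by
      intro h
      rw [hdL, ContinuousLinearMap.add_apply, ContinuousLinearMap.sum_apply]
      simp [PiLp.proj_apply]
    -- norm bounds
    have hdSnorm : ‖dS‖ ≤ 2 := by
      refine ContinuousLinearMap.opNorm_le_bound _ (by norm_num) fun h => ?_
      rw [hdSapply h, Real.norm_eq_abs, abs_mul, abs_two]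
      have hsq : (0:ℝ) ≤ ∑ k : Fin d, (h k.succ)^2 := Finset.sum_nonneg fun k _ => sq_nonneg _
      have hT2 : (∑ k : Fin d, ξ k.succ * h k.succ)^2 ≤ ‖h‖^2 := by
        nlinarith [hCSξ h, hspat h, hS0, hS1, hsq]
      have hT : |∑ k : Fin d, ξ k.succ * h k.succ| ≤ ‖h‖ := by
        have h3 := Real.sqrt_le_sqrt hT2
        rwa [Real.sqrt_sq_eq_abs, Real.sqrt_sq (norm_nonneg h)] at h3
      linarith
    have hdLnorm : ‖dL‖ ≤ 1 + F := by
      refine ContinuousLinearMap.opNorm_le_bound _ (by linarith) fun h => ?_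
      rw [hdLapply h, Real.norm_eq_abs]
      have hsq : (0:ℝ) ≤ ∑ k : Fin d, (h k.succ)^2 := Finset.sum_nonneg fun k _ => sq_nonneg _
      have h0 : |h 0| ≤ ‖h‖ := by
        have h1 := euclid_sum_sq h
        rw [Fin.sum_univ_succ] at h1
        have h2 : (h 0)^2 ≤ ‖h‖^2 := by
          nlinarith [hsq]
        have h3 := Real.sqrt_le_sqrt h2
        rwa [Real.sqrt_sq_eq_abs, Real.sqrt_sq (norm_nonneg h)] at h3
      have hvh : |∑ k : Fin d, v k * h k.succ| ≤ F * ‖h‖ := by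
        have h2 : (∑ k : Fin d, v k * h k.succ)^2 ≤ (F*‖h‖)^2 := by
          nlinarith [hCSv h, hspat h, sq_nonneg F, norm_nonneg h, hsq]
        have h3 := Real.sqrt_le_sqrt h2
        rwa [Real.sqrt_sq_eq_abs, Real.sqrt_sq (by positivity)] at h3
      calc |h 0 + ∑ k : Fin d, v k * h k.succ| ≤ |h 0| + |∑ k : Fin d, v k * h k.succ| :=
            abs_add_le _ _
        _ ≤ ‖h‖ + F * ‖h‖ := add_le_add h0 hvh
        _ = (1 + F) * ‖h‖ := by ring
    -- derivatives
    have hSder : HasFDerivAt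
        (fun y : EuclideanSpace ℝ (Fin (d+1)) => ∑ k : Fin d, y k.succ * y k.succ) dS ξ := by
      rw [hdS]
      exact HasFDerivAt.fun_sum fun k _ =>
        (euclid_coord_hasFDerivAt ξ k.succ).mul (euclid_coord_hasFDerivAt ξ k.succ)
    have hLder : HasFDerivAt
        (fun y : EuclideanSpace ℝ (Fin (d+1)) => y 0 + ∑ k : Fin d, v k * y k.succ) dL ξ := by
      rw [hdL]
      exact (euclid_coord_hasFDerivAt ξ 0).add
        (HasFDerivAt.fun_sum fun k _ => (euclid_coord_hasFDerivAt ξ k.succ).const_mul (v k))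
    have hNder : HasFDerivAt
        (fun y : EuclideanSpace ℝ (Fin (d+1)) => δ * ∑ k : Fin d, y k.succ * y k.succ)
        (δ • dS) ξ := hSder.const_mul δ
    have hQder := (hLder.mul hLder).add hNder
    have hQvaleq : (ξ 0 + ∑ k : Fin d, v k * ξ k.succ) * (ξ 0 + ∑ k : Fin d, v k * ξ k.succ)
        + δ * ∑ k : Fin d, ξ k.succ * ξ k.succ = Q := by
      have hSval : ∑ k : Fin d, ξ k.succ * ξ k.succ = S := by
        rw [hSdef]; exact Finset.sum_congr rfl fun k _ => (pow_two _).symm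
      rw [hSval, ← hLdef, hQdef]; ring
    have hQval : (fun y : EuclideanSpace ℝ (Fin (d+1)) =>
        (y 0 + ∑ k : Fin d, v k * y k.succ) * (y 0 + ∑ k : Fin d, v k * y k.succ)
          + δ * ∑ k : Fin d, y k.succ * y k.succ) ξ ≠ 0 := by
      show (ξ 0 + ∑ k : Fin d, v k * ξ k.succ) * (ξ 0 + ∑ k : Fin d, v k * ξ k.succ)
          + δ * ∑ k : Fin d, ξ k.succ * ξ k.succ ≠ 0
      rw [hQvaleq]; exact hQne
    have hQinv := (hasFDerivAt_inv' hQval).comp ξ hQder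
    have hRaw := hNder.mul hQinv
    have hpsieq : psiSym d v δ = fun y : EuclideanSpace ℝ (Fin (d+1)) =>
        (δ * ∑ k : Fin d, y k.succ * y k.succ) *
        ((y 0 + ∑ k : Fin d, v k * y k.succ) * (y 0 + ∑ k : Fin d, v k * y k.succ)
          + δ * ∑ k : Fin d, y k.succ * y k.succ)⁻¹ := by
      funext y
      simp only [psiSym, div_eq_mul_inv, pow_two]
    have hRaw' : HasFDerivAt (fun y : EuclideanSpace ℝ (Fin (d+1)) =>
        (δ * ∑ k : Fin d, y k.succ * y k.succ) *
        ((y 0 + ∑ k : Fin d, v k * y k.succ) * (y 0 + ∑ k : Fin d, v k * y k.succ)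
          + δ * ∑ k : Fin d, y k.succ * y k.succ)⁻¹) _ ξ := hRaw
    have hfder : fderiv ℝ (psiSym d v δ) ξ
        = (δ*L^2/Q^2) • dS - (2*δ*S*L/Q^2) • dL := by
      rw [hpsieq, hRaw'.fderiv]
      ext h
      simp only [ContinuousLinearMap.add_apply, ContinuousLinearMap.smul_apply,
        ContinuousLinearMap.coe_comp', Function.comp_apply, ContinuousLinearMap.neg_apply,
        ContinuousLinearMap.mulLeftRight_apply, ContinuousLinearMap.sub_apply, smul_eq_mul,
        Pi.add_apply, Pi.mul_apply]
      rw [show ∑ x : Fin d, ξ x.succ * ξ x.succ = S from by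
          rw [hSdef]; exact Finset.sum_congr rfl fun k _ => (pow_two _).symm,
        show ξ 0 + ∑ x : Fin d, v x * ξ x.succ = L from hLdef.symm,
        show L * L + δ * S = Q from by rw [hQdef]; ring]
      field_simp
      ring
    rw [hfder]
    clear_value dS dL S L Q G
    -- scalar estimates
    have hQ2pos : (0:ℝ) < Q^2 := pow_pos hQpos 2
    have hc1nn : (0:ℝ) ≤ δ*L^2/Q^2 := div_nonneg (mul_nonneg hδ0.le (sq_nonneg L)) (sq_nonneg Q)
    have hnorm1 : ‖(δ*L^2/Q^2) • dS - (2*δ*S*L/Q^2) • dL‖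
        ≤ (δ*L^2/Q^2) * 2 + (2*δ*S*|L|/Q^2) * (1+F) := by
      have e1 : ‖(δ*L^2/Q^2) • dS‖ ≤ (δ*L^2/Q^2) * 2 := by
        refine le_trans (ContinuousLinearMap.opNorm_smul_le _ _) ?_
        rw [Real.norm_eq_abs, abs_of_nonneg hc1nn]
        exact mul_le_mul_of_nonneg_left hdSnorm hc1nn
      have e2 : ‖(2*δ*S*L/Q^2) • dL‖ ≤ (2*δ*S*|L|/Q^2) * (1+F) := by
        refine le_trans (ContinuousLinearMap.opNorm_smul_le _ _) ?_
        rw [Real.norm_eq_abs]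
        have habs : |2*δ*S*L/Q^2| = 2*δ*S*|L|/Q^2 := by
          rw [abs_div, abs_mul,
            abs_of_nonneg (mul_nonneg (mul_nonneg (by norm_num) hδ0.le) hS0),
            abs_of_nonneg (le_of_lt hQ2pos)]
        rw [habs]
        refine mul_le_mul_of_nonneg_left hdLnorm ?_
        exact div_nonneg (mul_nonneg (mul_nonneg (mul_nonneg (by norm_num) hδ0.le) hS0)
          (abs_nonneg L)) (sq_nonneg Q)
      calc ‖(δ*L^2/Q^2) • dS - (2*δ*S*L/Q^2) • dL‖
          ≤ ‖(δ*L^2/Q^2) • dS‖ + ‖(2*δ*S*L/Q^2) • dL‖ := norm_sub_le _ _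
        _ ≤ (δ*L^2/Q^2) * 2 + (2*δ*S*|L|/Q^2) * (1+F) := add_le_add e1 e2
    refine le_trans hnorm1 ?_
    -- final scalar inequality
    have hrpow : δ ^ (-(1:ℝ)/2) = (Real.sqrt δ)⁻¹ := by
      rw [show (-(1:ℝ)/2) = -(1/2) by norm_num, Real.rpow_neg hδ0.le, Real.sqrt_eq_rpow]
    rw [hrpow]
    have hs2 : (Real.sqrt δ)^2 = δ := Real.sq_sqrt hδ0.le
    have hs0 : 0 < Real.sqrt δ := Real.sqrt_pos.mpr hδ0
    have hs1 : Real.sqrt δ ≤ 1 := by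
      rw [show (1:ℝ) = Real.sqrt 1 by rw [Real.sqrt_one]]
      exact Real.sqrt_le_sqrt hδ1
    have hr2 : (Real.sqrt Q)^2 = Q := Real.sq_sqrt hQpos.le
    have hr0 : 0 < Real.sqrt Q := Real.sqrt_pos.mpr hQpos
    have hsGr : Real.sqrt δ ≤ G * Real.sqrt Q := by
      rw [hGdef, ← Real.sqrt_mul (by positivity)]
      exact Real.sqrt_le_sqrt hQlow
    have hlr : |L| ≤ Real.sqrt Q := by
      have h1 : L^2 ≤ (Real.sqrt Q)^2 := by rw [hr2]; exact hQL
      have h2 := Real.sqrt_le_sqrt h1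
      rwa [Real.sqrt_sq_eq_abs, Real.sqrt_sq hr0.le] at h2
    set s := Real.sqrt δ with hsdef
    set r := Real.sqrt Q with hrdef
    clear_value s r
    clear hfder hnorm1 hpsieq hRaw hRaw' hQinv hQval hQvaleq hQder hNder hLder hSder
    clear hdSnorm hdLnorm hdSapply hdLapply hCSv hCSξ hspat hv2 hsum1 hξ hv
    clear hdS hdL dS dL hSdef hLdef hQdef hsdef hrdef hGdef
    clear ξ v
    have hl0 : 0 ≤ |L| := abs_nonneg L
    have hkey : s * (2*δ*L^2 + 2*(1+F)*(δ*S*|L|)) ≤ (2*G^2 + 2*(1+F)*G) * Q^2 := by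
      rw [← hs2, ← hr2]
      have e1 : s^2 ≤ G^2 * r^2 := by
        have := pow_le_pow_left₀ hs0.le hsGr 2
        calc s^2 ≤ (G*r)^2 := this
          _ = G^2 * r^2 := by ring
      have c1 : s^3 ≤ G^2 * r^2 := by
        have h31 : s^3 ≤ s^2 := pow_le_pow_of_le_one hs0.le hs1 (by norm_num)
        linarith
      have e3 : |L|^2 ≤ r^2 := by
        have := pow_le_pow_left₀ hl0 hlr 2
        linarith
      have t1 : s^3 * |L|^2 ≤ (G^2*r^2) * r^2 :=
        mul_le_mul c1 e3 (sq_nonneg _) (by positivity)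
      have c2 : s^2*S ≤ r^2 := by rw [hs2, hr2]; exact hQS
      have c3 : s*|L| ≤ (G*r)*r :=
        mul_le_mul hsGr hlr hl0 (mul_nonneg hGpos.le hr0.le)
      have t2 : (s^2*S)*(s*|L|) ≤ r^2 * ((G*r)*r) :=
        mul_le_mul c2 c3 (mul_nonneg hs0.le hl0) (sq_nonneg r)
      have hL2abs : L^2 = |L|^2 := (sq_abs L).symm
      rw [hL2abs]
      nlinarith [t1, t2, hF]
    have hfinal : (δ*L^2/Q^2) * 2 + (2*δ*S*|L|/Q^2) * (1+F)
        = (2*δ*L^2 + 2*(1+F)*(δ*S*|L|)) / Q^2 := by ring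
    rw [hfinal, div_le_iff₀ hQ2pos]
    calc 2*δ*L^2 + 2*(1+F)*(δ*S*|L|)
        = (s * (2*δ*L^2 + 2*(1+F)*(δ*S*|L|))) * s⁻¹ := by field_simp
      _ ≤ ((2*G^2 + 2*(1+F)*G) * Q^2) * s⁻¹ :=
          mul_le_mul_of_nonneg_right hkey (inv_nonneg.mpr hs0.le)
      _ = (2*G^2 + 2*(1+F)*G) * s⁻¹ * Q^2 := by ring
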